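/- Fix an impulse time sequence and consider the homogeneous impulsive system ẋ(t) = Ã(t)x(t) on the flow intervals with jumps x(t_k⁺) = J̃(k)x(t_k), where Ã is continuous, bounded and Metzler-valued and J̃(k) ≥ 0 for all k ≥ 1. Let b, d ∈ ℝ^n with b > 0 and d > 0, and suppose χ : [t_0,∞) → ℝ^n is piecewise-C¹ along the impulse sequence and satisfies χ̄₁ ≤ χ(t) ≤ χ̄₂ for all t ≥ t_0 for some vectors 0 < χ̄₁ ≤ χ̄₂, together with χ̇(t)ᵀ + χ(t)ᵀÃ(t) + bᵀ < 0 at every t in the interiors of the flow intervals and χ(t_k⁺)ᵀJ̃(k) − χ(t_k)ᵀ + dᵀ < 0 for all k ≥ 1. Set α = (min_i b_i)/(max_i (χ̄₂)_i) and ρ = 1 − (min_i d_i)/(max_i (χ̄₂)_i). Then ρ ∈ (0,1) and every trajectory x of the homogeneous system with x(t_0) ≥ 0 satisfies ‖x(t)‖_1 ≤ (max_i (χ̄₂)_i / min_i (χ̄₁)_i) · ρ^{κ(t,t_0)} · e^{−α(t−t_0)} · ‖x(t_0)‖_1 for all t ≥ t_0; consequently there exists M > 0 such that every trajectory of the homogeneous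 system satisfies ‖x(t)‖_1 ≤ M ρ^{κ(t,t_0)} e^{−α(t−t_0)} ‖x(t_0)‖_1 for all t ≥ t_0. -/

import Mathlib

open Matrix Filter Set Topology

/-- A square real matrix is Metzler if all its off-diagonal entries are nonnegative. -/
def Metzler {n : ℕ} (A : Matrix (Fin n) (Fin n) ℝ) : Prop :=
  ∀ i j, i ≠ j → 0 ≤ A i j

/-- An impulse time sequence: `t 0` is the initial time `t₀`, the `t k` for `k ≥ 1` are the
impulse times; the sequence is strictly increasing and tends to infinity. -/
structure ImpulseSeq where
  t : ℕ → ℝ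
  t0_nonneg : 0 ≤ t 0
  mono : StrictMono t
  tendsto_atTop : Filter.Tendsto t Filter.atTop Filter.atTop

/-- `κ(t,s)`: the number of impulse instants `t_k`, `k ≥ 1`, with `s ≤ t_k < t`. -/
noncomputable def ImpulseSeq.kappa (σ : ImpulseSeq) (s u : ℝ) : ℕ :=
  Set.ncard {k : ℕ | 1 ≤ k ∧ s ≤ σ.t k ∧ σ.t k < u}

/-- A trajectory of the homogeneous impulsive system `ẋ = Ã(t)x`, `x(t_k⁺) = J̃(k)x(t_k)`. -/
def IsHomTrajectory {n : ℕ} (σ : ImpulseSeq)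
    (At : ℝ → Matrix (Fin n) (Fin n) ℝ) (J : ℕ → Matrix (Fin n) (Fin n) ℝ)
    (x : ℝ → Fin n → ℝ) : Prop :=
  (∀ k, ContinuousOn x (Set.Ioc (σ.t k) (σ.t (k + 1)))) ∧
  (∀ k, ∀ s ∈ Set.Ioo (σ.t k) (σ.t (k + 1)), HasDerivAt x (At s *ᵥ x s) s) ∧
  ContinuousWithinAt x (Set.Ici (σ.t 0)) (σ.t 0) ∧
  (∀ k, 1 ≤ k →
    Filter.Tendsto x (nhdsWithin (σ.t k) (Set.Ioi (σ.t k))) (nhds (J k *ᵥ x (σ.t k))))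

/-- A function `f` is piecewise-C¹ along the impulse sequence, with derivative `f'` on the
interiors of the flow intervals and right limits `fplus k = f(t_k⁺)` at the impulse times. -/
def PiecewiseC1 {n : ℕ} (σ : ImpulseSeq)
    (f f' : ℝ → Fin n → ℝ) (fplus : ℕ → Fin n → ℝ) : Prop :=
  (∀ k, ContinuousOn f (Set.Ioc (σ.t k) (σ.t (k + 1)))) ∧
  (∀ k, ∀ s ∈ Set.Ioo (σ.t k) (σ.t (k + 1)), HasDerivAt f (f' s) s) ∧
  (∀ k, ContinuousOn f' (Set.Ioo (σ.t k) (σ.t (k + 1)))) ∧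
  ContinuousWithinAt f (Set.Ici (σ.t 0)) (σ.t 0) ∧
  (∀ k, 1 ≤ k →
    Filter.Tendsto f (nhdsWithin (σ.t k) (Set.Ioi (σ.t k))) (nhds (fplus k)))

/-- The 1-norm `‖v‖₁ = Σᵢ |vᵢ|` of a vector. -/
def norm1 {n : ℕ} (v : Fin n → ℝ) : ℝ := ∑ i, |v i|

section Aux

open Asymptotics

lemma absDerivAux {x : ℝ → ℝ} {v t : ℝ} (hx : HasDerivAt x v t) :
    ∃ g : ℝ, HasDerivWithinAt (fun u => |x u|) g (Set.Ici t) t ∧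
      ((0 < x t ∧ g = v) ∨ (x t < 0 ∧ g = -v) ∨ (x t = 0 ∧ g = |v|)) := by
  rcases lt_trichotomy (x t) 0 with hneg | hzero | hpos
  · refine ⟨-v, ?_, Or.inr (Or.inl ⟨hneg, rfl⟩)⟩
    have h : ∀ᶠ u in 𝓝 t, x u < 0 := hx.continuousAt.eventually (eventually_lt_nhds hneg)
    have heq : (fun u => |x u|) =ᶠ[𝓝 t] (fun u => -x u) :=
      h.mono fun u hu => abs_of_neg hu
    exact (hx.neg.congr_of_eventuallyEq heq).hasDerivWithinAt
  · refine ⟨|v|, ?_, Or.inr (Or.inr ⟨hzero, rfl⟩)⟩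
    rw [hasDerivWithinAt_iff_isLittleO]
    have h1 : (fun u => x u - x t - (u - t) • v) =o[𝓝[Set.Ici t] t] (fun u => u - t) :=
      (hasDerivAt_iff_isLittleO.mp hx).mono nhdsWithin_le_nhds
    have h2 : (fun u => |x u| - |x t| - (u - t) • |v|) =O[𝓝[Set.Ici t] t]
        (fun u => x u - x t - (u - t) • v) := by
      refine IsBigO.of_bound 1 ?_
      filter_upwards [self_mem_nhdsWithin] with u hu
      rw [one_mul]
      have hu' : (0:ℝ) ≤ u - t := sub_nonneg.mpr hu
      simp only [smul_eq_mul, hzero, abs_zero, sub_zero, Real.norm_eq_abs]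
      calc |(|x u| - (u - t) * |v|)| = |(|x u| - |(u - t) * v|)| := by
            rw [abs_mul, abs_of_nonneg hu']
        _ ≤ |x u - (u - t) * v| := abs_abs_sub_abs_le_abs_sub _ _
    exact h2.trans_isLittleO h1
  · refine ⟨v, ?_, Or.inl ⟨hpos, rfl⟩⟩
    have h : ∀ᶠ u in 𝓝 t, 0 < x u := hx.continuousAt.eventually (eventually_gt_nhds hpos)
    have heq : (fun u => |x u|) =ᶠ[𝓝 t] x := h.mono fun u hu => abs_of_pos hu
    exact (hx.congr_of_eventuallyEq heq).hasDerivWithinAt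

lemma flowDecayAux {V : ℝ → ℝ} {α a b : ℝ} (hV : ContinuousOn V (Set.Icc a b))
    (hD : ∀ t ∈ Set.Ico a b, ∃ D, HasDerivWithinAt V D (Set.Ici t) t ∧ D ≤ -α * V t) :
    ∀ u ∈ Set.Icc a b, V u ≤ V a * Real.exp (-α * (u - a)) := by
  intro u hu
  have key := le_gronwallBound_of_liminf_deriv_right_le (f := V)
    (f' := fun t => -α * V t) (δ := V a) (K := -α) (ε := 0) (a := a) (b := b) hV
    ?_ le_rfl ?_ u hu
  · rwa [gronwallBound_ε0] at key
  · intro t ht r hr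
    obtain ⟨D, hDeriv, hDle⟩ := hD t ht
    have hslope : Filter.Tendsto (slope V t) (𝓝[>] t) (𝓝 D) := by
      have := hasDerivWithinAt_iff_tendsto_slope.mp hDeriv
      rwa [Set.Ici_sdiff_left] at this
    have hev : ∀ᶠ z in 𝓝[>] t, slope V t z < r :=
      hslope.eventually_lt_const (lt_of_le_of_lt hDle hr)
    refine (hev.mono fun z hz => ?_).frequently
    rwa [slope_def_field, div_eq_inv_mul] at hz
  · exact fun t ht => by
      obtain ⟨D, _, hDle⟩ := hD t ht
      simpa using hDle

lemma kappaAux (σ : ImpulseSeq) {k : ℕ} {u : ℝ} (h1 : σ.t k < u) (h2 : u ≤ σ.t (k + 1)) :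
    σ.kappa (σ.t 0) u = k := by
  have hset : {j : ℕ | 1 ≤ j ∧ σ.t 0 ≤ σ.t j ∧ σ.t j < u} = ↑(Finset.Icc 1 k) := by
    ext j
    simp only [Set.mem_setOf_eq, Finset.coe_Icc, Set.mem_Icc]
    constructor
    · rintro ⟨hj1, -, hju⟩
      refine ⟨hj1, ?_⟩
      have : j < k + 1 := σ.mono.lt_iff_lt.mp (lt_of_lt_of_le hju h2)
      omega
    · rintro ⟨hj1, hjk⟩
      exact ⟨hj1, σ.mono.monotone (Nat.zero_le j),
        lt_of_le_of_lt (σ.mono.monotone hjk) h1⟩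
  rw [ImpulseSeq.kappa, hset, Set.ncard_coe_finset, Nat.card_Icc]
  omega

lemma kappaAux0 (σ : ImpulseSeq) : σ.kappa (σ.t 0) (σ.t 0) = 0 := by
  have hset : {j : ℕ | 1 ≤ j ∧ σ.t 0 ≤ σ.t j ∧ σ.t j < σ.t 0} = ∅ := by
    ext j; simp only [Set.mem_setOf_eq, Set.mem_empty_iff_false, iff_false]
    rintro ⟨-, hj, hj'⟩; exact absurd hj (not_le.mpr hj')
  rw [ImpulseSeq.kappa, hset, Set.ncard_empty]

lemma existsInterval (σ : ImpulseSeq) {u : ℝ} (hu : σ.t 0 < u) :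
    ∃ k, σ.t k < u ∧ u ≤ σ.t (k + 1) := by
  have hne : ∃ m, u ≤ σ.t m := by
    obtain ⟨m, hm⟩ := (σ.tendsto_atTop.eventually_ge_atTop u).exists
    exact ⟨m, hm⟩
  classical
  let m := Nat.find hne
  have hm : u ≤ σ.t m := Nat.find_spec hne
  have hm1 : m ≠ 0 := by
    intro h; rw [h] at hm; exact absurd hm (not_le.mpr hu)
  refine ⟨m - 1, ?_, ?_⟩
  · have := Nat.find_min hne (m := m - 1) (by omega)
    exact not_le.mp this
  · have : m - 1 + 1 = m := by omega
    rw [this]; exact hm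

end Aux

/-- Sufficiency of a linear sum-separable copositive Lyapunov certificate: quantitative
exponential decay in the 1-norm with hybrid rate `(α, ρ)`. -/
theorem sum_separable_lyapunov_suff {n : ℕ} (hn : 0 < n) (σ : ImpulseSeq)
    (At : ℝ → Matrix (Fin n) (Fin n) ℝ) (J : ℕ → Matrix (Fin n) (Fin n) ℝ)
    (hAcont : ContinuousOn At (Set.Ici 0))
    (hAb : ∃ M, ∀ t ∈ Set.Ici (0 : ℝ), ∀ i j, |At t i j| ≤ M)
    (hAM : ∀ t : ℝ, 0 ≤ t → Metzler (At t))
    (hJ : ∀ k : ℕ, 1 ≤ k → ∀ i j, 0 ≤ J k i j)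
    (b d : Fin n → ℝ) (hb : ∀ i, 0 < b i) (hd : ∀ i, 0 < d i)
    (χ χ' : ℝ → Fin n → ℝ) (χp : ℕ → Fin n → ℝ)
    (hpc : PiecewiseC1 σ χ χ' χp)
    (χ1 χ2 : Fin n → ℝ) (hχ1 : ∀ i, 0 < χ1 i) (hχ12 : ∀ i, χ1 i ≤ χ2 i)
    (hbound : ∀ s : ℝ, σ.t 0 ≤ s → ∀ i, χ1 i ≤ χ s i ∧ χ s i ≤ χ2 i)
    (hflow : ∀ k, ∀ s ∈ Set.Ioo (σ.t k) (σ.t (k + 1)),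
      ∀ j, (χ' s + χ s ᵥ* At s + b) j < 0)
    (hjump : ∀ k : ℕ, 1 ≤ k → ∀ j, (χp k ᵥ* J k - χ (σ.t k) + d) j < 0) :
    (1 - (⨅ i, d i) / (⨆ i, χ2 i)) ∈ Set.Ioo (0 : ℝ) 1 ∧
    (∀ x : ℝ → Fin n → ℝ, IsHomTrajectory σ At J x → (∀ i, 0 ≤ x (σ.t 0) i) →
      ∀ s : ℝ, σ.t 0 ≤ s →
        norm1 (x s) ≤ ((⨆ i, χ2 i) / (⨅ i, χ1 i)) *
          ((1 - (⨅ i, d i) / (⨆ i, χ2 i)) ^ (σ.kappa (σ.t 0) s) *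
            (Real.exp (-(((⨅ i, b i) / (⨆ i, χ2 i)) * (s - σ.t 0))) * norm1 (x (σ.t 0))))) ∧
    (∃ M : ℝ, 0 < M ∧
      ∀ x : ℝ → Fin n → ℝ, IsHomTrajectory σ At J x →
        ∀ s : ℝ, σ.t 0 ≤ s →
          norm1 (x s) ≤ M * ((1 - (⨅ i, d i) / (⨆ i, χ2 i)) ^ (σ.kappa (σ.t 0) s) *
            (Real.exp (-(((⨅ i, b i) / (⨆ i, χ2 i)) * (s - σ.t 0))) * norm1 (x (σ.t 0))))) := by
  classical
  have hnemp : Nonempty (Fin n) := ⟨⟨0, hn⟩⟩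
  set c1 := ⨅ i, χ1 i with hc1def
  set c2 := ⨆ i, χ2 i with hc2def
  set ib := ⨅ i, b i with hibdef
  set idd := ⨅ i, d i with hiddef
  set α := ib / c2 with hαdef
  set ρ := 1 - idd / c2 with hρdef
  have hc1le : ∀ i, c1 ≤ χ1 i := fun i => ciInf_le (Set.finite_range χ1).bddBelow i
  have hc2ge : ∀ i, χ2 i ≤ c2 := fun i => le_ciSup (Set.finite_range χ2).bddAbove i
  have hible : ∀ i, ib ≤ b i := fun i => ciInf_le (Set.finite_range b).bddBelow i
  have hiddle : ∀ i, idd ≤ d i := fun i => ciInf_le (Set.finite_range d).bddBelow i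
  have hc1pos : 0 < c1 := by
    obtain ⟨i, hi⟩ := exists_eq_ciInf_of_finite (f := χ1)
    rw [hc1def, ← hi]; exact hχ1 i
  have hc2pos : 0 < c2 :=
    lt_of_lt_of_le hc1pos (le_trans (hc1le ⟨0, hn⟩) (le_trans (hχ12 _) (hc2ge _)))
  have hibpos : 0 < ib := by
    obtain ⟨i, hi⟩ := exists_eq_ciInf_of_finite (f := b)
    rw [hibdef, ← hi]; exact hb i
  have hiddpos : 0 < idd := by
    obtain ⟨i, hi⟩ := exists_eq_ciInf_of_finite (f := d)
    rw [hiddef, ← hi]; exact hd i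
  have hαpos : 0 < α := div_pos hibpos hc2pos
  -- right limits of χ are bounded below by χ1
  have hχp : ∀ k, 1 ≤ k → ∀ i, χ1 i ≤ χp k i := by
    intro k hk i
    have htend : Tendsto (fun s => χ s i) (𝓝[>] (σ.t k)) (𝓝 (χp k i)) :=
      ((continuous_apply i).tendsto _).comp (hpc.2.2.2.2 k hk)
    refine ge_of_tendsto htend ?_
    filter_upwards [self_mem_nhdsWithin] with s hs
    exact (hbound s (le_of_lt (lt_of_le_of_lt (σ.mono.monotone (Nat.zero_le k)) hs)) i).1
  -- ρ ∈ (0,1)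
  have hd_lt : idd < c2 := by
    set j0 : Fin n := ⟨0, hn⟩
    have hjp := hjump 1 le_rfl j0
    simp only [Pi.add_apply, Pi.sub_apply] at hjp
    have hnn : 0 ≤ (χp 1 ᵥ* J 1) j0 := by
      rw [Matrix.vecMul, dotProduct]
      exact Finset.sum_nonneg fun i _ =>
        mul_nonneg (le_trans (hχ1 i).le (hχp 1 le_rfl i)) (hJ 1 le_rfl i j0)
    have ht1 : σ.t 0 ≤ σ.t 1 := (σ.mono (by norm_num)).le
    have hcb := (hbound (σ.t 1) ht1 j0).2
    have := hc2ge j0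
    have := hiddle j0
    linarith
  have hρmem : ρ ∈ Set.Ioo (0:ℝ) 1 := by
    constructor
    · rw [hρdef]; have : idd / c2 < 1 := (div_lt_one hc2pos).mpr hd_lt; linarith
    · rw [hρdef]; have : 0 < idd / c2 := div_pos hiddpos hc2pos; linarith
  have hρ0 : (0:ℝ) ≤ ρ := hρmem.1.le
  -- the core quantitative estimate for all trajectories
  have core : ∀ x : ℝ → Fin n → ℝ, IsHomTrajectory σ At J x →
      ∀ s : ℝ, σ.t 0 ≤ s → norm1 (x s) ≤ (c2 / c1) *
        (ρ ^ (σ.kappa (σ.t 0) s) * (Real.exp (-(α * (s - σ.t 0))) * norm1 (x (σ.t 0)))) := by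
    rintro x ⟨hxc, hxd, hxc0, hxj⟩ s hs
    set V : ℝ → ℝ := fun u => ∑ i, χ u i * |x u i| with hVdef
    have habs : ∀ u, 0 ≤ norm1 (x u) := fun u => Finset.sum_nonneg fun i _ => abs_nonneg _
    have hVlow : ∀ u, σ.t 0 ≤ u → c1 * norm1 (x u) ≤ V u := by
      intro u hu
      rw [norm1, Finset.mul_sum]
      exact Finset.sum_le_sum fun i _ =>
        mul_le_mul_of_nonneg_right (le_trans (hc1le i) (hbound u hu i).1) (abs_nonneg _)
    have hVup : ∀ u, σ.t 0 ≤ u → V u ≤ c2 * norm1 (x u) := by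
      intro u hu
      rw [norm1, Finset.mul_sum]
      exact Finset.sum_le_sum fun i _ =>
        mul_le_mul_of_nonneg_right (le_trans (hbound u hu i).2 (hc2ge i)) (abs_nonneg _)
    -- exponential decay along flow intervals
    have hflowdec : ∀ (k : ℕ) (a u : ℝ), σ.t k < a → a ≤ u → u ≤ σ.t (k+1) →
        V u ≤ V a * Real.exp (-α * (u - a)) := by
      intro k a u hka hau huk
      have hsub : Set.Icc a u ⊆ Set.Ioc (σ.t k) (σ.t (k+1)) := fun z hz =>
        ⟨lt_of_lt_of_le hka hz.1, le_trans hz.2 huk⟩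
      have hVcont : ContinuousOn V (Set.Icc a u) := by
        apply continuousOn_finset_sum
        intro i _
        exact (((continuous_apply i).comp_continuousOn ((hpc.1 k).mono hsub))).mul
          (continuous_abs.comp_continuousOn
            ((continuous_apply i).comp_continuousOn ((hxc k).mono hsub)))
      refine flowDecayAux hVcont ?_ u ⟨hau, le_rfl⟩
      intro τ hτ
      have hτmem : τ ∈ Set.Ioo (σ.t k) (σ.t (k+1)) :=
        ⟨lt_of_lt_of_le hka hτ.1, lt_of_lt_of_le hτ.2 huk⟩
      have ht0τ : σ.t 0 ≤ τ := le_trans (σ.mono.monotone (Nat.zero_le k)) hτmem.1.le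
      have hτ0 : (0:ℝ) ≤ τ := le_trans σ.t0_nonneg ht0τ
      have hxD := hxd k τ hτmem
      have hχD := hpc.2.1 k τ hτmem
      choose g hgd hgc using fun i => absDerivAux (hasDerivAt_pi.1 hxD i)
      have hDW : HasDerivWithinAt V (∑ i, (χ' τ i * |x τ i| + χ τ i * g i))
          (Set.Ici τ) τ := by
        apply HasDerivWithinAt.fun_sum
        intro i _
        exact ((hasDerivAt_pi.1 hχD i).hasDerivWithinAt).mul (hgd i)
      refine ⟨_, hDW, ?_⟩
      have hw : ∀ j, (0:ℝ) ≤ |x τ j| := fun j => abs_nonneg _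
      have hgle : ∀ i, g i ≤ ∑ j, At τ i j * |x τ j| := by
        intro i
        have hv : (At τ *ᵥ x τ) i = ∑ j, At τ i j * x τ j := by
          rw [Matrix.mulVec, dotProduct]
        rcases hgc i with ⟨hsgn, hgi⟩ | ⟨hsgn, hgi⟩ | ⟨hsgn, hgi⟩
        · rw [hgi, hv]
          refine Finset.sum_le_sum fun j _ => ?_
          rcases eq_or_ne j i with hji | hji
          · subst hji; rw [abs_of_pos hsgn]
          · exact mul_le_mul_of_nonneg_left (le_abs_self _)
              (hAM τ hτ0 i j (Ne.symm hji))
        · rw [hgi, hv, ← Finset.sum_neg_distrib]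
          refine Finset.sum_le_sum fun j _ => ?_
          rcases eq_or_ne j i with hji | hji
          · subst hji; rw [abs_of_neg hsgn]; ring_nf; exact le_rfl
          · have := hAM τ hτ0 i j (Ne.symm hji)
            have habs' : -(x τ j) ≤ |x τ j| := neg_le_abs _
            nlinarith
        · rw [hgi, hv]
          refine le_trans (Finset.abs_sum_le_sum_abs _ _)
            (Finset.sum_le_sum fun j _ => ?_)
          rcases eq_or_ne j i with hji | hji
          · subst hji; rw [hsgn]; simp
          · rw [abs_mul, abs_of_nonneg (hAM τ hτ0 i j (Ne.symm hji))]
      have hχnn : ∀ i, (0:ℝ) ≤ χ τ i := fun i =>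
        le_trans (hχ1 i).le (hbound τ ht0τ i).1
      have hswap : ∑ i, χ τ i * (∑ j, At τ i j * |x τ j|)
          = ∑ j, (χ τ ᵥ* At τ) j * |x τ j| := by
        simp_rw [Finset.mul_sum]
        rw [Finset.sum_comm]
        refine Finset.sum_congr rfl fun j _ => ?_
        rw [Matrix.vecMul, dotProduct, Finset.sum_mul]
        exact Finset.sum_congr rfl fun i _ => by ring
      calc ∑ i, (χ' τ i * |x τ i| + χ τ i * g i)
          ≤ ∑ i, (χ' τ i * |x τ i| + χ τ i * (∑ j, At τ i j * |x τ j|)) :=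
            Finset.sum_le_sum fun i _ => add_le_add_right
              (mul_le_mul_of_nonneg_left (hgle i) (hχnn i)) _
        _ = ∑ j, (χ' τ j + (χ τ ᵥ* At τ) j) * |x τ j| := by
            rw [Finset.sum_add_distrib, hswap, ← Finset.sum_add_distrib]
            exact Finset.sum_congr rfl fun j _ => by ring
        _ ≤ ∑ j, -α * (χ τ j * |x τ j|) := by
            refine Finset.sum_le_sum fun j _ => ?_
            have hf := hflow k τ hτmem j
            simp only [Pi.add_apply] at hf
            have hαχ : α * χ τ j ≤ b j := by
              have h1 : α * χ τ j ≤ α * c2 :=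
                mul_le_mul_of_nonneg_left (le_trans (hbound τ ht0τ j).2 (hc2ge j)) hαpos.le
              have h2 : α * c2 = ib := by
                rw [hαdef]; field_simp
              linarith [hible j]
            nlinarith [hw j]
        _ = -α * V τ := by rw [← Finset.mul_sum]
    -- behaviour at impulse times
    have hjumpdec : ∀ k, 1 ≤ k → ∃ L, Tendsto V (𝓝[>] (σ.t k)) (𝓝 L) ∧
        L ≤ ρ * V (σ.t k) := by
      intro k hk
      refine ⟨∑ i, χp k i * |(J k *ᵥ x (σ.t k)) i|, ?_, ?_⟩
      · apply tendsto_finset_sum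
        intro i _
        exact ((((continuous_apply i).tendsto _).comp (hpc.2.2.2.2 k hk))).mul
          ((continuous_abs.tendsto _).comp
            (((continuous_apply i).tendsto _).comp (hxj k hk)))
      · have ht0k : σ.t 0 ≤ σ.t k := σ.mono.monotone (Nat.zero_le k)
        have h1 : ∀ i, |(J k *ᵥ x (σ.t k)) i| ≤ ∑ j, J k i j * |x (σ.t k) j| := by
          intro i
          have hv : (J k *ᵥ x (σ.t k)) i = ∑ j, J k i j * x (σ.t k) j := by
            rw [Matrix.mulVec, dotProduct]
          rw [hv]
          refine le_trans (Finset.abs_sum_le_sum_abs _ _)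
            (Finset.sum_le_sum fun j _ => ?_)
          rw [abs_mul, abs_of_nonneg (hJ k hk i j)]
        have hswap : ∑ i, χp k i * (∑ j, J k i j * |x (σ.t k) j|)
            = ∑ j, (χp k ᵥ* J k) j * |x (σ.t k) j| := by
          simp_rw [Finset.mul_sum]
          rw [Finset.sum_comm]
          refine Finset.sum_congr rfl fun j _ => ?_
          rw [Matrix.vecMul, dotProduct, Finset.sum_mul]
          exact Finset.sum_congr rfl fun i _ => by ring
        calc ∑ i, χp k i * |(J k *ᵥ x (σ.t k)) i|
            ≤ ∑ i, χp k i * (∑ j, J k i j * |x (σ.t k) j|) :=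
              Finset.sum_le_sum fun i _ => mul_le_mul_of_nonneg_left (h1 i)
                (le_trans (hχ1 i).le (hχp k hk i))
          _ = ∑ j, (χp k ᵥ* J k) j * |x (σ.t k) j| := hswap
          _ ≤ ∑ j, ρ * (χ (σ.t k) j * |x (σ.t k) j|) := by
              refine Finset.sum_le_sum fun j _ => ?_
              have hjp := hjump k hk j
              simp only [Pi.add_apply, Pi.sub_apply] at hjp
              have hχub : χ (σ.t k) j ≤ c2 := le_trans (hbound _ ht0k j).2 (hc2ge j)
              have hidd : idd / c2 * χ (σ.t k) j ≤ d j := by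
                have h1' : idd / c2 * χ (σ.t k) j ≤ idd / c2 * c2 :=
                  mul_le_mul_of_nonneg_left hχub (div_pos hiddpos hc2pos).le
                have h2' : idd / c2 * c2 = idd := by field_simp
                linarith [hiddle j]
              have hcoef : (χp k ᵥ* J k) j ≤ ρ * χ (σ.t k) j := by
                rw [hρdef]; nlinarith
              calc (χp k ᵥ* J k) j * |x (σ.t k) j|
                  ≤ ρ * χ (σ.t k) j * |x (σ.t k) j| :=
                    mul_le_mul_of_nonneg_right hcoef (abs_nonneg _)
                _ = ρ * (χ (σ.t k) j * |x (σ.t k) j|) := by ring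
          _ = ρ * V (σ.t k) := by rw [← Finset.mul_sum]
    -- limit of V at t0 from the right
    have hVt0 : Tendsto V (𝓝[>] (σ.t 0)) (𝓝 (V (σ.t 0))) := by
      apply tendsto_finset_sum
      intro i _
      have hχt : Tendsto (fun u => χ u i) (𝓝[>] (σ.t 0)) (𝓝 (χ (σ.t 0) i)) :=
        ((continuous_apply i).tendsto _).comp
          (hpc.2.2.2.1.mono_left (nhdsWithin_mono _ Set.Ioi_subset_Ici_self))
      have hxt : Tendsto (fun u => x u i) (𝓝[>] (σ.t 0)) (𝓝 (x (σ.t 0) i)) :=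
        ((continuous_apply i).tendsto _).comp
          (hxc0.mono_left (nhdsWithin_mono _ Set.Ioi_subset_Ici_self))
      exact hχt.mul ((continuous_abs.tendsto _).comp hxt)
    -- main induction over the flow intervals
    have hmain : ∀ k : ℕ, ∀ u, σ.t k < u → u ≤ σ.t (k+1) →
        V u ≤ ρ ^ k * (Real.exp (-(α * (u - σ.t 0))) * V (σ.t 0)) := by
      intro k
      induction k with
      | zero =>
        intro u hu1 hu2
        have hexp : Tendsto (fun a : ℝ => Real.exp (-α * (u - a))) (𝓝[>] (σ.t 0))
            (𝓝 (Real.exp (-α * (u - σ.t 0)))) :=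
          ((Real.continuous_exp.comp
            (continuous_const.mul (continuous_const.sub continuous_id))).tendsto
              (σ.t 0)).mono_left nhdsWithin_le_nhds
        have hlim : Tendsto (fun a => V a * Real.exp (-α * (u - a))) (𝓝[>] (σ.t 0))
            (𝓝 (V (σ.t 0) * Real.exp (-α * (u - σ.t 0)))) := hVt0.mul hexp
        have h1 : V u ≤ V (σ.t 0) * Real.exp (-α * (u - σ.t 0)) := by
          refine ge_of_tendsto hlim ?_
          filter_upwards [Ioo_mem_nhdsGT_of_mem ⟨le_rfl, hu1⟩] with a ha
          exact hflowdec 0 a u ha.1 ha.2.le hu2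
        rw [pow_zero, one_mul, neg_mul] at *
        linarith [h1]
      | succ k ih =>
        intro u hu1 hu2
        obtain ⟨L, hLt, hLle⟩ := hjumpdec (k+1) (by omega)
        have hexp : Tendsto (fun a : ℝ => Real.exp (-α * (u - a))) (𝓝[>] (σ.t (k+1)))
            (𝓝 (Real.exp (-α * (u - σ.t (k+1))))) :=
          ((Real.continuous_exp.comp
            (continuous_const.mul (continuous_const.sub continuous_id))).tendsto
              (σ.t (k+1))).mono_left nhdsWithin_le_nhds
        have hlim : Tendsto (fun a => V a * Real.exp (-α * (u - a))) (𝓝[>] (σ.t (k+1)))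
            (𝓝 (L * Real.exp (-α * (u - σ.t (k+1))))) := hLt.mul hexp
        have h1 : V u ≤ L * Real.exp (-α * (u - σ.t (k+1))) := by
          refine ge_of_tendsto hlim ?_
          filter_upwards [Ioo_mem_nhdsGT_of_mem ⟨le_rfl, hu1⟩] with a ha
          exact hflowdec (k+1) a u ha.1 ha.2.le hu2
        have h2 : V (σ.t (k+1)) ≤ ρ ^ k * (Real.exp (-(α * (σ.t (k+1) - σ.t 0))) * V (σ.t 0)) :=
          ih (σ.t (k+1)) (σ.mono (Nat.lt_succ_self k)) le_rfl
        have hE1 : (0:ℝ) < Real.exp (-α * (u - σ.t (k+1))) := Real.exp_pos _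
        calc V u ≤ L * Real.exp (-α * (u - σ.t (k+1))) := h1
          _ ≤ (ρ * V (σ.t (k+1))) * Real.exp (-α * (u - σ.t (k+1))) :=
              mul_le_mul_of_nonneg_right hLle hE1.le
          _ ≤ (ρ * (ρ ^ k * (Real.exp (-(α * (σ.t (k+1) - σ.t 0))) * V (σ.t 0)))) *
              Real.exp (-α * (u - σ.t (k+1))) :=
              mul_le_mul_of_nonneg_right (mul_le_mul_of_nonneg_left h2 hρ0) hE1.le
          _ = ρ ^ (k+1) * ((Real.exp (-α * (u - σ.t (k+1))) *
              Real.exp (-(α * (σ.t (k+1) - σ.t 0)))) * V (σ.t 0)) := by ring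
          _ = ρ ^ (k+1) * (Real.exp (-(α * (u - σ.t 0))) * V (σ.t 0)) := by
              rw [← Real.exp_add]; congr 2; ring
    -- conclusion of the core estimate
    rcases eq_or_lt_of_le hs with heq | hlt
    · rw [← heq, kappaAux0 σ, pow_zero, one_mul, sub_self, mul_zero, neg_zero,
        Real.exp_zero, one_mul]
      have hc12 : (1:ℝ) ≤ c2 / c1 := by
        rw [le_div_iff₀ hc1pos, one_mul]
        exact le_trans (hc1le ⟨0, hn⟩) (le_trans (hχ12 _) (hc2ge _))
      nlinarith [habs (σ.t 0)]
    · obtain ⟨k, hk1, hk2⟩ := existsInterval σ hlt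
      have hV := hmain k s hk1 hk2
      rw [kappaAux σ hk1 hk2]
      have hVt0up : V (σ.t 0) ≤ c2 * norm1 (x (σ.t 0)) := hVup _ le_rfl
      have h3 : V s ≤ ρ ^ k * (Real.exp (-(α * (s - σ.t 0))) * (c2 * norm1 (x (σ.t 0)))) :=
        le_trans hV (mul_le_mul_of_nonneg_left
          (mul_le_mul_of_nonneg_left hVt0up (Real.exp_pos _).le)
          (pow_nonneg hρ0 k))
      have h4 : c1 * norm1 (x s) ≤ V s := hVlow s hlt.le
      have heqq : c2 / c1 * (ρ ^ k * (Real.exp (-(α * (s - σ.t 0))) * norm1 (x (σ.t 0))))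
          = (ρ ^ k * (Real.exp (-(α * (s - σ.t 0))) * (c2 * norm1 (x (σ.t 0))))) / c1 := by
        field_simp
      rw [heqq, le_div_iff₀ hc1pos]
      nlinarith [h3, h4]
  -- assemble the three parts
  refine ⟨hρmem, fun x hx _ s hs => core x hx s hs,
    ⟨c2 / c1, div_pos hc2pos hc1pos, fun x hx s hs => core x hx s hs⟩⟩
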